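/- Let X₁, …, X_m be independent nonnegative random variables, β > 0, b > 0, c₁, …, c_m > 0 with ∑_{i=1}^m c_i ≤ b, and suppose E[exp(β·X_i/c_i)] ≤ 2·exp((1 − ε/2)β) for each i, where 0 < ε. Let W = ∑_{i=1}^m X_i. Then E[(W − b)⁺] ≤ (b/β)·log(1 + 2·exp(−εβ/2)). -/

import Mathlib

open MeasureTheory ProbabilityTheory

theorem capacity_overflow_bound
    {Ω : Type*} [MeasurableSpace Ω] (μ : Measure Ω) [IsProbabilityMeasure μ]
    {m : ℕ} (X : Fin m → Ω → ℝ) (β b ε : ℝ) (c : Fin m → ℝ)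
    (hβ : 0 < β) (hb : 0 < b) (hε : 0 < ε) (hc : ∀ i, 0 < c i)
    (hsum : ∑ i, c i ≤ b)
    (hXnn : ∀ i ω, 0 ≤ X i ω)
    (hXmeas : ∀ i, Measurable (X i))
    (hindep : iIndepFun X μ)
    (hint : ∀ i, Integrable (fun ω => Real.exp (β * X i ω / c i)) μ)
    (hKi : ∀ i, ∫ ω, Real.exp (β * X i ω / c i) ∂μ ≤ 2 * Real.exp ((1 - ε / 2) * β)) :
    ∫ ω, max ((∑ i, X i ω) - b) 0 ∂μ ≤
      (b / β) * Real.log (1 + 2 * Real.exp (-ε * β / 2)) := by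
  have hRHSnn : 0 ≤ (b / β) * Real.log (1 + 2 * Real.exp (-ε * β / 2)) := by
    apply mul_nonneg (by positivity)
    apply Real.log_nonneg
    nlinarith [Real.exp_pos (-ε * β / 2)]
  rcases Nat.eq_zero_or_pos m with hm | hm
  · subst hm
    have : (fun ω => max ((∑ i : Fin 0, X i ω) - b) 0) = fun _ => (0 : ℝ) := by
      funext ω
      simp only [Finset.univ_eq_empty, Finset.sum_empty, zero_sub]
      exact max_eq_right (by linarith)
    rw [this, integral_zero]
    exact hRHSnn
  -- main case
  set W : Ω → ℝ := fun ω => ∑ i, X i ω with hW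
  have hWmeas : Measurable W := Finset.measurable_sum _ fun i _ => hXmeas i
  set M : ℝ := 2 * Real.exp ((1 - ε / 2) * β) with hM
  set s : ℝ := ∑ i, c i / b with hs
  have hs_eq : s = (∑ i, c i) / b := by rw [hs, Finset.sum_div]
  have hs_pos : 0 < s := by
    rw [hs_eq]
    have : 0 < ∑ i, c i :=
      Finset.sum_pos (fun i _ => hc i) (Finset.univ_nonempty_iff.2 ⟨⟨0, hm⟩⟩)
    positivity
  have hs_le : s ≤ 1 := by
    rw [hs_eq, div_le_one hb]; exact hsum
  set Y : Ω → ℝ := fun ω => Real.exp (β * W ω / b) with hY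
  have hYmeas : Measurable Y := (((hWmeas.const_mul β).div_const b).exp)
  set g : Ω → ℝ := fun ω => (∑ i, (c i / b) * Real.exp (β * X i ω / c i)) + (1 - s) with hg
  -- pointwise convexity bound
  have hYg : ∀ ω, Y ω ≤ g ω := by
    intro ω
    set y : Fin m → ℝ := fun i => β * X i ω / c i with hy
    have hynn : ∀ i, 0 ≤ y i := fun i => by
      have := hXnn i ω; have := (hc i).le; positivity
    set z : ℝ := ∑ i, (c i / b) * y i with hz
    have hznn : 0 ≤ z :=
      Finset.sum_nonneg fun i _ => mul_nonneg (by have := (hc i).le; positivity) (hynn i)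
    have hzW : z = β * W ω / b := by
      rw [hz, hW]
      rw [Finset.mul_sum, Finset.sum_div]
      apply Finset.sum_congr rfl
      intro i _
      have hci := (hc i).ne'
      calc c i / b * (β * X i ω / c i) = β * X i ω * (c i / c i) / b := by ring
        _ = β * X i ω / b := by rw [div_self hci, mul_one]
    -- Jensen (centerMass form): exp (z / s) ≤ (∑ w_i exp (y i)) / s
    have hjensen : Real.exp ((Finset.univ.centerMass (fun i => c i / b) y)) ≤
        Finset.univ.centerMass (fun i => c i / b) (Real.exp ∘ y) :=
      convexOn_exp.map_centerMass_le (fun i _ => by have := (hc i).le; positivity)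
        (by rw [← hs] at *; exact hs_pos) (fun i _ => Set.mem_univ _)
    rw [Finset.centerMass, Finset.centerMass] at hjensen
    simp only [smul_eq_mul, ← hs, ← hz] at hjensen
    have hjensen' : Real.exp (s⁻¹ * z) ≤ s⁻¹ * ∑ i, (c i / b) * Real.exp (y i) := by
      convert hjensen using 2
      rfl
    -- two-point convexity: exp z ≤ s * exp (z/s) + (1-s)
    have htwo : Real.exp z ≤ s * Real.exp (s⁻¹ * z) + (1 - s) := by
      have h2 := convexOn_exp.2 (Set.mem_univ (s⁻¹ * z)) (Set.mem_univ (0 : ℝ))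
        hs_pos.le (show (0:ℝ) ≤ 1 - s by linarith) (by ring)
      simp only [smul_eq_mul, mul_zero, add_zero, Real.exp_zero, mul_one] at h2
      have : s * (s⁻¹ * z) = z := by
        field_simp
      rwa [this] at h2
    have : Real.exp z ≤ (∑ i, (c i / b) * Real.exp (y i)) + (1 - s) := by
      have h3 : s * Real.exp (s⁻¹ * z) ≤ s * (s⁻¹ * ∑ i, (c i / b) * Real.exp (y i)) :=
        mul_le_mul_of_nonneg_left hjensen' hs_pos.le
      have h4 : s * (s⁻¹ * ∑ i, (c i / b) * Real.exp (y i)) =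
          ∑ i, (c i / b) * Real.exp (y i) := by field_simp
      linarith
    have hYz : Y ω = Real.exp z := by rw [hzW]
    have hgz : g ω = (∑ i, (c i / b) * Real.exp (y i)) + (1 - s) := rfl
    rw [hYz, hgz]
    exact this
  have hYnn : ∀ ω, 0 ≤ Y ω := fun ω => (Real.exp_pos _).le
  have hgint : Integrable g μ := by
    apply Integrable.add _ (integrable_const _)
    apply integrable_finset_sum
    intro i _
    exact (hint i).const_mul _
  have hYint : Integrable Y μ := by
    refine hgint.mono' hYmeas.aestronglyMeasurable (ae_of_all _ fun ω => ?_)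
    rw [Real.norm_eq_abs, abs_of_nonneg (hYnn ω)]
    exact hYg ω
  have hM1 : 1 ≤ M := by
    have i0 : Fin m := ⟨0, hm⟩
    have h1 : (1 : ℝ) ≤ ∫ ω, Real.exp (β * X i0 ω / c i0) ∂μ := by
      have := integral_mono (integrable_const (1 : ℝ)) (hint i0) (fun ω => by
        have hx := hXnn i0 ω; have hci := (hc i0).le
        exact Real.one_le_exp (by positivity))
      simpa using this
    exact h1.trans (hKi i0)
  have hEY : ∫ ω, Y ω ∂μ ≤ M := by
    have h1 : ∫ ω, Y ω ∂μ ≤ ∫ ω, g ω ∂μ := integral_mono hYint hgint hYg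
    have h2 : ∫ ω, g ω ∂μ = (∑ i, (c i / b) * ∫ ω, Real.exp (β * X i ω / c i) ∂μ) + (1 - s) := by
      rw [hg]
      rw [integral_add (integrable_finset_sum _ fun i _ => (hint i).const_mul _)
        (integrable_const _)]
      rw [integral_finset_sum _ fun i _ => (hint i).const_mul _, integral_const]
      simp only [measure_univ, ENNReal.toReal_one, one_smul, probReal_univ]
      congr 1
      exact Finset.sum_congr rfl fun i _ => integral_const_mul _ _
    have h3 : (∑ i, (c i / b) * ∫ ω, Real.exp (β * X i ω / c i) ∂μ) ≤ ∑ i, (c i / b) * M := by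
      apply Finset.sum_le_sum
      intro i _
      exact mul_le_mul_of_nonneg_left (hKi i) (by have := (hc i).le; positivity)
    have h4 : (∑ i, (c i / b) * M) = s * M := by
      rw [hs, Finset.sum_mul]
    nlinarith
  -- Z = exp(-β) * Y
  set Z : Ω → ℝ := fun ω => Real.exp (-β) * Y ω with hZ
  have hZint : Integrable Z μ := hYint.const_mul _
  have hZmeas : Measurable Z := hYmeas.const_mul _
  have hZpos : ∀ ω, 0 < Z ω := fun ω => mul_pos (Real.exp_pos _) (Real.exp_pos _)
  have hZexp : ∀ ω, Z ω = Real.exp (β * (W ω - b) / b) := by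
    intro ω
    show Real.exp (-β) * Real.exp (β * W ω / b) = _
    rw [← Real.exp_add]
    congr 1
    field_simp
    ring
  set a : ℝ := ∫ ω, Z ω ∂μ with ha
  have ha_nn : 0 ≤ a := integral_nonneg fun ω => (hZpos ω).le
  have ha_le : a ≤ 2 * Real.exp (-ε * β / 2) := by
    have h1 : a = Real.exp (-β) * ∫ ω, Y ω ∂μ := by
      rw [ha, hZ]; exact integral_const_mul _ _
    have h2 : Real.exp (-β) * M = 2 * Real.exp (-ε * β / 2) := by
      rw [hM]
      rw [show Real.exp (-β) * (2 * Real.exp ((1 - ε / 2) * β)) =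
        2 * (Real.exp (-β) * Real.exp ((1 - ε / 2) * β)) by ring, ← Real.exp_add]
      congr 2
      ring
    rw [h1, ← h2]
    exact mul_le_mul_of_nonneg_left hEY (Real.exp_pos _).le
  -- pointwise: max (W - b) 0 ≤ (b/β) * log (1 + Z)
  have hpt : ∀ ω, max (W ω - b) 0 ≤ (b / β) * Real.log (1 + Z ω) := by
    intro ω
    have hlognn : 0 ≤ Real.log (1 + Z ω) := Real.log_nonneg (by linarith [hZpos ω])
    rcases le_or_gt (W ω - b) 0 with h | h
    · rw [max_eq_right h]
      positivity
    · rw [max_eq_left h.le]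
      have h1 : W ω - b = (b / β) * Real.log (Z ω) := by
        rw [hZexp ω, Real.log_exp]
        field_simp
      rw [h1]
      apply mul_le_mul_of_nonneg_left _ (by positivity)
      exact Real.log_le_log (hZpos ω) (by linarith)
  -- integrability of log (1 + Z)
  have hlogmeas : Measurable fun ω => Real.log (1 + Z ω) :=
    Real.measurable_log.comp (measurable_const.add hZmeas)
  have hlogle : ∀ ω, Real.log (1 + Z ω) ≤ Z ω := fun ω => by
    have := Real.log_le_sub_one_of_pos (show (0:ℝ) < 1 + Z ω by linarith [hZpos ω])
    linarith
  have hlognn : ∀ ω, 0 ≤ Real.log (1 + Z ω) := fun ω =>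
    Real.log_nonneg (by linarith [hZpos ω])
  have hlogint : Integrable (fun ω => Real.log (1 + Z ω)) μ := by
    refine hZint.mono' hlogmeas.aestronglyMeasurable (ae_of_all _ fun ω => ?_)
    rw [Real.norm_eq_abs, abs_of_nonneg (hlognn ω)]
    exact hlogle ω
  -- tangent line bound: ∫ log(1+Z) ≤ log(1+a)
  have htan : ∫ ω, Real.log (1 + Z ω) ∂μ ≤ Real.log (1 + a) := by
    have h1a : (0:ℝ) < 1 + a := by linarith
    have hptan : ∀ ω, Real.log (1 + Z ω) ≤
        (Real.log (1 + a) - a / (1 + a)) + (1 + a)⁻¹ * Z ω := by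
      intro ω
      have hq : (0:ℝ) < (1 + Z ω) / (1 + a) := by
        have := hZpos ω; positivity
      have h2 := Real.log_le_sub_one_of_pos hq
      rw [Real.log_div (by linarith [hZpos ω]) (by linarith)] at h2
      have h3 : (1 + Z ω) / (1 + a) = (1 + a)⁻¹ + (1 + a)⁻¹ * Z ω := by
        field_simp
      have h4 : (1 + a)⁻¹ - 1 = -(a / (1 + a)) := by
        field_simp
        ring
      nlinarith [h2, h3, h4]
    have h5 : ∫ ω, ((Real.log (1 + a) - a / (1 + a)) + (1 + a)⁻¹ * Z ω) ∂μ =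
        (Real.log (1 + a) - a / (1 + a)) + (1 + a)⁻¹ * a := by
      rw [integral_add (integrable_const _) (hZint.const_mul _),
        integral_const_mul, ← ha]
      simp [measure_univ]
    have hFint : Integrable (fun ω => (Real.log (1 + a) - a / (1 + a)) + (1 + a)⁻¹ * Z ω) μ :=
      (integrable_const _).add (hZint.const_mul _)
    have h6 := integral_mono hlogint hFint hptan
    rw [h5] at h6
    have h7 : (Real.log (1 + a) - a / (1 + a)) + (1 + a)⁻¹ * a = Real.log (1 + a) := by
      field_simp
      ring
    linarith
  -- put it together
  have hmaxint : Integrable (fun ω => max (W ω - b) 0) μ := by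
    have hmeas : Measurable fun ω => max (W ω - b) 0 :=
      (hWmeas.sub_const b).max measurable_const
    refine (hlogint.const_mul (b / β)).mono' hmeas.aestronglyMeasurable
      (ae_of_all _ fun ω => ?_)
    rw [Real.norm_eq_abs, abs_of_nonneg (le_max_right _ _)]
    exact hpt ω
  calc ∫ ω, max (W ω - b) 0 ∂μ
      ≤ ∫ ω, (b / β) * Real.log (1 + Z ω) ∂μ :=
        integral_mono hmaxint (hlogint.const_mul _) hpt
    _ = (b / β) * ∫ ω, Real.log (1 + Z ω) ∂μ := integral_const_mul _ _
    _ ≤ (b / β) * Real.log (1 + a) :=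
        mul_le_mul_of_nonneg_left htan (by positivity)
    _ ≤ (b / β) * Real.log (1 + 2 * Real.exp (-ε * β / 2)) := by
        apply mul_le_mul_of_nonneg_left _ (by positivity)
        exact Real.log_le_log (by linarith) (by linarith)
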